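/- arXiv:1304.4441 — 4 statements merged into one kernel-verified Lean document; each statement's English description precedes it below -/
import Mathlib

section
/- For any real numbers x, ε₁, ε₂, the product (e^{x+ε₁}/(1+e^{x+ε₁})) · (1/(1+e^{x+ε₂})) is at most e^{-|x|+|ε₁|+|ε₂|}. -/
theorem logistic_pair_bound (x ε₁ ε₂ : ℝ) :
    (Real.exp (x + ε₁) / (1 + Real.exp (x + ε₁))) * (1 / (1 + Real.exp (x + ε₂)))
      ≤ Real.exp (-|x| + |ε₁| + |ε₂|) := by
  have e1 := Real.exp_pos (x + ε₁)
  have e2 := Real.exp_pos (x + ε₂)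
  have h1 : Real.exp (x + ε₁) / (1 + Real.exp (x + ε₁)) ≤ 1 := by
    rw [div_le_one (by positivity)]; linarith
  have h2 : Real.exp (x + ε₁) / (1 + Real.exp (x + ε₁)) ≤ Real.exp (x + ε₁) := by
    rw [div_le_iff₀ (by positivity)]; nlinarith
  have h3 : (1 : ℝ) / (1 + Real.exp (x + ε₂)) ≤ 1 := by
    rw [div_le_one (by positivity)]; linarith
  have h4 : (1 : ℝ) / (1 + Real.exp (x + ε₂)) ≤ Real.exp (-(x + ε₂)) := by
    rw [div_le_iff₀ (by positivity)]
    have : Real.exp (-(x + ε₂)) * Real.exp (x + ε₂) = 1 := by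
      rw [← Real.exp_add, neg_add_cancel, Real.exp_zero]
    nlinarith [Real.exp_pos (-(x + ε₂))]
  have hn1 : -|ε₁| ≤ ε₁ := neg_abs_le ε₁
  have hn2 : -|ε₂| ≤ ε₂ := neg_abs_le ε₂
  have h1' : ε₁ ≤ |ε₁| := le_abs_self ε₁
  have h2' : ε₂ ≤ |ε₂| := le_abs_self ε₂
  rcases le_or_gt 0 x with hx | hx
  · rw [abs_of_nonneg hx]
    calc Real.exp (x + ε₁) / (1 + Real.exp (x + ε₁)) * (1 / (1 + Real.exp (x + ε₂)))
        ≤ 1 * Real.exp (-(x + ε₂)) := by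
          apply mul_le_mul h1 h4 (by positivity) (by norm_num)
      _ = Real.exp (-(x + ε₂)) := one_mul _
      _ ≤ Real.exp (-x + |ε₁| + |ε₂|) := by
          apply Real.exp_le_exp.mpr
          have := abs_nonneg ε₁
          linarith
  · rw [abs_of_neg hx]
    calc Real.exp (x + ε₁) / (1 + Real.exp (x + ε₁)) * (1 / (1 + Real.exp (x + ε₂)))
        ≤ Real.exp (x + ε₁) * 1 := by
          apply mul_le_mul h2 h3 (by positivity) (le_of_lt e1)
      _ = Real.exp (x + ε₁) := mul_one _
      _ ≤ Real.exp (- -x + |ε₁| + |ε₂|) := by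
          apply Real.exp_le_exp.mpr
          have := abs_nonneg ε₂
          linarith
end

section
/- There exists a constant K > 0 such that for all real θ₁, θ₂, the triple integral ∫₀^∞ ∫_{-∞}^{∞} ∫_{-∞}^{∞} τ^{-1/2} e^{-τ(η₁²+η₂²)} e^{-(|θ₁+η₁|+|θ₁-η₁|+|θ₂+η₂|+|θ₂-η₂|)} dη₁ dη₂ dτ ≤ K e^{-(|θ₁|+|θ₂|)}. -/
open MeasureTheory Set Real

private noncomputable def tem_g (θ τ η : ℝ) : ℝ :=
  Real.exp (-(τ * η ^ 2)) * Real.exp (-(|θ + η| + |θ - η|))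

private lemma tem_abs_bound (θ η : ℝ) : |θ| + |η| ≤ |θ + η| + |θ - η| := by
  have h1 : |(θ + η) + (θ - η)| ≤ |θ + η| + |θ - η| := abs_add_le _ _
  have h2 : |(θ + η) - (θ - η)| ≤ |θ + η| + |θ - η| := abs_sub _ _
  have e1 : (θ + η) + (θ - η) = 2 * θ := by ring
  have e2 : (θ + η) - (θ - η) = 2 * η := by ring
  rw [e1, abs_mul] at h1
  rw [e2, abs_mul] at h2
  have : |(2:ℝ)| = 2 := by norm_num
  rw [this] at h1 h2
  linarith

private lemma tem_exp_neg_abs_le (η : ℝ) : Real.exp (-|η|) ≤ 4 * (1 + η ^ 2)⁻¹ := by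
  have h0 : (0:ℝ) < 1 + η ^ 2 := by positivity
  have h1 : (1 + |η| / 2) ≤ Real.exp (|η| / 2) := by
    have := Real.add_one_le_exp (|η| / 2); linarith
  have h2 : (1 + |η| / 2) ^ 2 ≤ Real.exp (|η| / 2) ^ 2 := by
    have hnn : (0:ℝ) ≤ 1 + |η| / 2 := by positivity
    exact pow_le_pow_left₀ hnn h1 2
  have h3 : Real.exp (|η| / 2) ^ 2 = Real.exp |η| := by
    rw [sq, ← Real.exp_add]; congr 1; ring
  have h4 : (1 + η ^ 2) / 4 ≤ (1 + |η| / 2) ^ 2 := by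
    have : η ^ 2 = |η| ^ 2 := (sq_abs η).symm
    have hnn : (0:ℝ) ≤ |η| := abs_nonneg η
    nlinarith
  have key : 1 + η ^ 2 ≤ 4 * Real.exp |η| := by
    have := h3 ▸ h2
    nlinarith [abs_nonneg η, sq_abs η]
  rw [← div_eq_mul_inv, le_div_iff₀ h0]
  calc Real.exp (-|η|) * (1 + η ^ 2) ≤ Real.exp (-|η|) * (4 * Real.exp |η|) :=
        mul_le_mul_of_nonneg_left key (Real.exp_pos _).le
    _ = 4 * (Real.exp (-|η|) * Real.exp |η|) := by ring
    _ = 4 := by rw [← Real.exp_add]; simp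

private lemma tem_g_nonneg (θ τ η : ℝ) : 0 ≤ tem_g θ τ η := by
  unfold tem_g; positivity

private lemma tem_g_le (θ τ η : ℝ) (hτ : 0 < τ) :
    tem_g θ τ η ≤ Real.exp (-|θ|) * (4 * (1 + η ^ 2)⁻¹) := by
  unfold tem_g
  have h1 : Real.exp (-(τ * η ^ 2)) ≤ 1 := by
    rw [Real.exp_le_one_iff]
    have : 0 ≤ τ * η ^ 2 := by positivity
    linarith
  have h2 : Real.exp (-(|θ + η| + |θ - η|)) ≤ Real.exp (-|θ|) * Real.exp (-|η|) := by
    rw [← Real.exp_add, Real.exp_le_exp]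
    have := tem_abs_bound θ η; linarith
  calc Real.exp (-(τ * η ^ 2)) * Real.exp (-(|θ + η| + |θ - η|))
      ≤ 1 * (Real.exp (-|θ|) * Real.exp (-|η|)) := by
        exact mul_le_mul h1 h2 (Real.exp_pos _).le zero_le_one
    _ = Real.exp (-|θ|) * Real.exp (-|η|) := by ring
    _ ≤ Real.exp (-|θ|) * (4 * (1 + η ^ 2)⁻¹) := by
        exact mul_le_mul_of_nonneg_left (tem_exp_neg_abs_le η) (Real.exp_pos _).le

private lemma tem_g_integrable (θ τ : ℝ) (hτ : 0 < τ) : Integrable (tem_g θ τ) := by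
  have hcont : Continuous (tem_g θ τ) := by
    unfold tem_g; fun_prop
  refine Integrable.mono' ((integrable_inv_one_add_sq.const_mul 4).const_mul (Real.exp (-|θ|)))
    hcont.aestronglyMeasurable ?_
  filter_upwards with η
  rw [Real.norm_eq_abs, abs_of_nonneg (tem_g_nonneg θ τ η)]
  simpa using tem_g_le θ τ η hτ

private noncomputable def tem_c : ℝ := 4 * ∫ x : ℝ, (1 + x ^ 2)⁻¹

private lemma tem_c_nonneg : 0 ≤ tem_c := by
  have : 0 ≤ ∫ x : ℝ, (1 + x ^ 2)⁻¹ :=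
    integral_nonneg fun x => by positivity
  unfold tem_c; linarith

private lemma tem_G_nonneg (θ τ : ℝ) : 0 ≤ ∫ η, tem_g θ τ η :=
  integral_nonneg (tem_g_nonneg θ τ)

private lemma tem_G_le_c (θ τ : ℝ) (hτ : 0 < τ) :
    (∫ η, tem_g θ τ η) ≤ Real.exp (-|θ|) * tem_c := by
  have h := integral_mono (tem_g_integrable θ τ hτ)
    (((integrable_inv_one_add_sq.const_mul 4).const_mul (Real.exp (-|θ|))))
    (fun η => tem_g_le θ τ η hτ)
  calc (∫ η, tem_g θ τ η) ≤ ∫ η : ℝ, Real.exp (-|θ|) * (4 * (1 + η ^ 2)⁻¹) := h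
    _ = Real.exp (-|θ|) * tem_c := by
        rw [integral_const_mul, integral_const_mul]; rfl

private lemma tem_G_le_gauss (θ τ : ℝ) (hτ : 0 < τ) :
    (∫ η, tem_g θ τ η) ≤ Real.exp (-|θ|) * Real.sqrt (Real.pi / τ) := by
  have hptwise : ∀ η : ℝ, tem_g θ τ η ≤ Real.exp (-|θ|) * Real.exp (-(τ * η ^ 2)) := by
    intro η
    unfold tem_g
    rw [mul_comm (Real.exp (-|θ|))]
    refine mul_le_mul_of_nonneg_left ?_ (Real.exp_pos _).le
    rw [Real.exp_le_exp]
    have := tem_abs_bound θ η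
    have := abs_nonneg η
    linarith
  have hint : Integrable (fun η : ℝ => Real.exp (-(τ * η ^ 2))) := by
    simpa [neg_mul] using integrable_exp_neg_mul_sq hτ
  have h := integral_mono (tem_g_integrable θ τ hτ) (hint.const_mul _) hptwise
  calc (∫ η, tem_g θ τ η) ≤ ∫ η : ℝ, Real.exp (-|θ|) * Real.exp (-(τ * η ^ 2)) := h
    _ = Real.exp (-|θ|) * ∫ η : ℝ, Real.exp (-τ * η ^ 2) := by
        rw [integral_const_mul]; simp [neg_mul]
    _ = Real.exp (-|θ|) * Real.sqrt (Real.pi / τ) := by rw [integral_gaussian]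

private lemma tem_inner_eq (θ₁ θ₂ τ : ℝ) :
    (∫ η₂ : ℝ, ∫ η₁ : ℝ,
        τ ^ (-(1:ℝ)/2) * Real.exp (-τ * (η₁ ^ 2 + η₂ ^ 2)) *
          Real.exp (-(|θ₁ + η₁| + |θ₁ - η₁| + |θ₂ + η₂| + |θ₂ - η₂|))) =
      τ ^ (-(1:ℝ)/2) * ((∫ η, tem_g θ₁ τ η) * (∫ η, tem_g θ₂ τ η)) := by
  have e1 : ∀ η₂ : ℝ,
      (∫ η₁ : ℝ, τ ^ (-(1:ℝ)/2) * Real.exp (-τ * (η₁ ^ 2 + η₂ ^ 2)) *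
          Real.exp (-(|θ₁ + η₁| + |θ₁ - η₁| + |θ₂ + η₂| + |θ₂ - η₂|))) =
        (τ ^ (-(1:ℝ)/2) * tem_g θ₂ τ η₂) * ∫ η₁, tem_g θ₁ τ η₁ := by
    intro η₂
    rw [← integral_const_mul]
    congr 1
    funext η₁
    unfold tem_g
    rw [show -τ * (η₁ ^ 2 + η₂ ^ 2) = -(τ * η₁ ^ 2) + -(τ * η₂ ^ 2) by ring,
      Real.exp_add,
      show -(|θ₁ + η₁| + |θ₁ - η₁| + |θ₂ + η₂| + |θ₂ - η₂|) =
        -(|θ₁ + η₁| + |θ₁ - η₁|) + -(|θ₂ + η₂| + |θ₂ - η₂|) by ring,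
      Real.exp_add]
    ring
  simp only [e1]
  simp only [show ∀ η₂ : ℝ, τ ^ (-(1:ℝ)/2) * tem_g θ₂ τ η₂ * (∫ η₁, tem_g θ₁ τ η₁) =
      (τ ^ (-(1:ℝ)/2) * ∫ η₁, tem_g θ₁ τ η₁) * tem_g θ₂ τ η₂ from fun η₂ => by ring]
  rw [integral_const_mul]
  ring

theorem test_effect_marginalization_bound :
    ∃ K > 0, ∀ θ₁ θ₂ : ℝ,
      (∫ τ in Set.Ioi (0:ℝ), ∫ η₂ : ℝ, ∫ η₁ : ℝ,
          τ ^ (-(1:ℝ)/2) * Real.exp (-τ * (η₁ ^ 2 + η₂ ^ 2)) *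
            Real.exp (-(|θ₁ + η₁| + |θ₁ - η₁| + |θ₂ + η₂| + |θ₂ - η₂|))) ≤
        K * Real.exp (-(|θ₁| + |θ₂|)) := by
  set I₁ : ℝ := ∫ τ in Set.Ioc (0:ℝ) 1, τ ^ (-(1:ℝ)/2) with hI₁def
  set I₂ : ℝ := ∫ τ in Set.Ioi (1:ℝ), τ ^ (-(3:ℝ)/2) with hI₂def
  have hint₁ : IntegrableOn (fun τ : ℝ => τ ^ (-(1:ℝ)/2)) (Set.Ioc 0 1) := by
    have h := intervalIntegral.intervalIntegrable_rpow' (a := 0) (b := 1)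
      (r := -(1:ℝ)/2) (by norm_num)
    rwa [intervalIntegrable_iff_integrableOn_Ioc_of_le zero_le_one] at h
  have hint₂ : IntegrableOn (fun τ : ℝ => τ ^ (-(3:ℝ)/2)) (Set.Ioi 1) := by
    have h := integrableOn_Ioi_rpow_of_lt (a := -(3:ℝ)/2) (by norm_num) (c := 1) one_pos
    exact h
  have hI₁nonneg : 0 ≤ I₁ :=
    setIntegral_nonneg measurableSet_Ioc fun τ hτ => Real.rpow_nonneg hτ.1.le _
  have hI₂nonneg : 0 ≤ I₂ :=
    setIntegral_nonneg measurableSet_Ioi fun τ hτ =>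
      Real.rpow_nonneg (le_trans zero_le_one hτ.le) _
  refine ⟨tem_c ^ 2 * I₁ + Real.pi * I₂ + 1, by
    have h1 := mul_nonneg (sq_nonneg tem_c) hI₁nonneg
    have h2 := mul_nonneg Real.pi_pos.le hI₂nonneg
    linarith, fun θ₁ θ₂ => ?_⟩
  simp only [tem_inner_eq θ₁ θ₂]
  set L : ℝ → ℝ := fun τ =>
    τ ^ (-(1:ℝ)/2) * ((∫ η, tem_g θ₁ τ η) * (∫ η, tem_g θ₂ τ η)) with hLdef
  by_cases hI : IntegrableOn L (Set.Ioi 0)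
  · have hsplit : Set.Ioi (0:ℝ) = Set.Ioc 0 1 ∪ Set.Ioi 1 :=
      (Set.Ioc_union_Ioi_eq_Ioi zero_le_one).symm
    have hdisj : Disjoint (Set.Ioc (0:ℝ) 1) (Set.Ioi 1) := Set.Ioc_disjoint_Ioi le_rfl
    have hIa : IntegrableOn L (Set.Ioc 0 1) := hI.mono_set (by rw [hsplit]; exact Set.subset_union_left)
    have hIb : IntegrableOn L (Set.Ioi 1) := hI.mono_set (by rw [hsplit]; exact Set.subset_union_right)
    have hs : Real.exp (-|θ₁|) * Real.exp (-|θ₂|) = Real.exp (-(|θ₁| + |θ₂|)) := by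
      rw [← Real.exp_add]; ring_nf
    have h1 : ∫ τ in Set.Ioc (0:ℝ) 1, L τ ≤
        (tem_c ^ 2 * Real.exp (-(|θ₁| + |θ₂|))) * I₁ := by
      have hmono := setIntegral_mono_on hIa
        ((hint₁.const_mul (tem_c ^ 2 * Real.exp (-(|θ₁| + |θ₂|)))))
        measurableSet_Ioc (fun τ hτ => ?_)
      · calc ∫ τ in Set.Ioc (0:ℝ) 1, L τ
            ≤ ∫ τ in Set.Ioc (0:ℝ) 1,
              (tem_c ^ 2 * Real.exp (-(|θ₁| + |θ₂|))) * τ ^ (-(1:ℝ)/2) := hmono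
          _ = (tem_c ^ 2 * Real.exp (-(|θ₁| + |θ₂|))) * I₁ := by
              rw [hI₁def, ← integral_const_mul]
      · have hτ0 : 0 < τ := hτ.1
        have hb₁ := tem_G_le_c θ₁ τ hτ0
        have hb₂ := tem_G_le_c θ₂ τ hτ0
        have hrn : (0:ℝ) ≤ τ ^ (-(1:ℝ)/2) := Real.rpow_nonneg hτ0.le _
        have hGG : (∫ η, tem_g θ₁ τ η) * (∫ η, tem_g θ₂ τ η) ≤
            tem_c ^ 2 * Real.exp (-(|θ₁| + |θ₂|)) := by
          have := mul_le_mul hb₁ hb₂ (tem_G_nonneg θ₂ τ)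
            (mul_nonneg (Real.exp_pos _).le tem_c_nonneg)
          calc (∫ η, tem_g θ₁ τ η) * (∫ η, tem_g θ₂ τ η)
              ≤ (Real.exp (-|θ₁|) * tem_c) * (Real.exp (-|θ₂|) * tem_c) := this
            _ = tem_c ^ 2 * (Real.exp (-|θ₁|) * Real.exp (-|θ₂|)) := by ring
            _ = tem_c ^ 2 * Real.exp (-(|θ₁| + |θ₂|)) := by rw [hs]
        calc L τ = τ ^ (-(1:ℝ)/2) * ((∫ η, tem_g θ₁ τ η) * (∫ η, tem_g θ₂ τ η)) := rfl
          _ ≤ τ ^ (-(1:ℝ)/2) * (tem_c ^ 2 * Real.exp (-(|θ₁| + |θ₂|))) :=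
              mul_le_mul_of_nonneg_left hGG hrn
          _ = (tem_c ^ 2 * Real.exp (-(|θ₁| + |θ₂|))) * τ ^ (-(1:ℝ)/2) := by ring
    have h2 : ∫ τ in Set.Ioi (1:ℝ), L τ ≤
        (Real.pi * Real.exp (-(|θ₁| + |θ₂|))) * I₂ := by
      have hmono := setIntegral_mono_on hIb
        ((hint₂.const_mul (Real.pi * Real.exp (-(|θ₁| + |θ₂|)))))
        measurableSet_Ioi (fun τ hτ => ?_)
      · calc ∫ τ in Set.Ioi (1:ℝ), L τ
            ≤ ∫ τ in Set.Ioi (1:ℝ),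
              (Real.pi * Real.exp (-(|θ₁| + |θ₂|))) * τ ^ (-(3:ℝ)/2) := hmono
          _ = (Real.pi * Real.exp (-(|θ₁| + |θ₂|))) * I₂ := by
              rw [hI₂def, ← integral_const_mul]
      · have hτ0 : 0 < τ := lt_trans one_pos hτ
        have hb₁ := tem_G_le_gauss θ₁ τ hτ0
        have hb₂ := tem_G_le_gauss θ₂ τ hτ0
        have hrn : (0:ℝ) ≤ τ ^ (-(1:ℝ)/2) := Real.rpow_nonneg hτ0.le _
        have hsq : Real.sqrt (Real.pi / τ) * Real.sqrt (Real.pi / τ) = Real.pi / τ :=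
          Real.mul_self_sqrt (div_nonneg Real.pi_pos.le hτ0.le)
        have hGG : (∫ η, tem_g θ₁ τ η) * (∫ η, tem_g θ₂ τ η) ≤
            Real.exp (-(|θ₁| + |θ₂|)) * (Real.pi / τ) := by
          have := mul_le_mul hb₁ hb₂ (tem_G_nonneg θ₂ τ) (by positivity)
          calc (∫ η, tem_g θ₁ τ η) * (∫ η, tem_g θ₂ τ η)
              ≤ (Real.exp (-|θ₁|) * Real.sqrt (Real.pi / τ)) *
                (Real.exp (-|θ₂|) * Real.sqrt (Real.pi / τ)) := this
            _ = (Real.exp (-|θ₁|) * Real.exp (-|θ₂|)) *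
                (Real.sqrt (Real.pi / τ) * Real.sqrt (Real.pi / τ)) := by ring
            _ = Real.exp (-(|θ₁| + |θ₂|)) * (Real.pi / τ) := by rw [hs, hsq]
        have hrpow : τ ^ (-(1:ℝ)/2) * τ⁻¹ = τ ^ (-(3:ℝ)/2) := by
          rw [← Real.rpow_neg_one τ, ← Real.rpow_add hτ0]
          norm_num
        calc L τ = τ ^ (-(1:ℝ)/2) * ((∫ η, tem_g θ₁ τ η) * (∫ η, tem_g θ₂ τ η)) := rfl
          _ ≤ τ ^ (-(1:ℝ)/2) * (Real.exp (-(|θ₁| + |θ₂|)) * (Real.pi / τ)) :=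
              mul_le_mul_of_nonneg_left hGG hrn
          _ = (Real.pi * Real.exp (-(|θ₁| + |θ₂|))) * (τ ^ (-(1:ℝ)/2) * τ⁻¹) := by
              ring
          _ = (Real.pi * Real.exp (-(|θ₁| + |θ₂|))) * τ ^ (-(3:ℝ)/2) := by rw [hrpow]
    have hsum : ∫ τ in Set.Ioi (0:ℝ), L τ =
        (∫ τ in Set.Ioc (0:ℝ) 1, L τ) + ∫ τ in Set.Ioi (1:ℝ), L τ := by
      rw [hsplit] at hI ⊢
      exact setIntegral_union hdisj measurableSet_Ioi
        (hI.mono_set Set.subset_union_left) (hI.mono_set Set.subset_union_right)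
    rw [hsum]
    have hexp : (0:ℝ) < Real.exp (-(|θ₁| + |θ₂|)) := Real.exp_pos _
    nlinarith [h1, h2, hexp]
  · rw [integral_undef hI]
    have hexp : (0:ℝ) < Real.exp (-(|θ₁| + |θ₂|)) := Real.exp_pos _
    nlinarith [mul_nonneg (sq_nonneg tem_c) hI₁nonneg,
      mul_nonneg Real.pi_pos.le hI₂nonneg]
end

section
/- There exists a constant K > 0 such that for all real θ₁, θ₂, the triple integral ∫₀^∞ ∫_{-∞}^{∞} ∫_{-∞}^{∞} δ^{-1/2} e^{-(δ/2)(φ₁²+φ₂²)} e^{-(|θ₁+φ₁|+|θ₂+φ₂|)} dφ₁ dφ₂ dδ ≤ K/(1+|θ₁|). -/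
open MeasureTheory
open Real Set


lemma aux_integrable_exp_abs {c : ℝ} (hc : 0 < c) (θ : ℝ) :
    Integrable (fun φ : ℝ => Real.exp (-(c * |θ + φ|))) := by
  have base : Integrable (fun x : ℝ => Real.exp (-(c * |x|))) := by
    have hcont : Continuous fun x : ℝ => Real.exp (-(c * |x|)) := by fun_prop
    set m := min 1 (c ^ 2 / 4) with hm
    have hmpos : 0 < m := by positivity
    refine (integrable_inv_one_add_sq.const_mul m⁻¹).mono' hcont.aestronglyMeasurable ?_
    filter_upwards with x
    have h0 : (0:ℝ) ≤ 1 + c * |x| / 2 := by positivity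
    have h1 : 1 + c * |x| / 2 ≤ Real.exp (c * |x| / 2) := by
      have := Real.add_one_le_exp (c * |x| / 2); linarith
    have hsq : (1 + c * |x| / 2) ^ 2 ≤ Real.exp (c * |x|) := by
      calc (1 + c * |x| / 2) ^ 2 ≤ Real.exp (c * |x| / 2) ^ 2 := by
            exact pow_le_pow_left₀ h0 h1 2
        _ = Real.exp (c * |x|) := by
            rw [sq, ← Real.exp_add]; ring_nf
    have h2 : m * (1 + x ^ 2) ≤ Real.exp (c * |x|) := by
      have hml : m ≤ 1 := min_le_left _ _
      have hmr : m ≤ c ^ 2 / 4 := min_le_right _ _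
      nlinarith [sq_abs x, abs_nonneg x, mul_nonneg hc.le (abs_nonneg x)]
    have hpos : 0 < m * (1 + x ^ 2) := by positivity
    rw [Real.norm_eq_abs, abs_of_nonneg (Real.exp_nonneg _), Real.exp_neg]
    calc (Real.exp (c * |x|))⁻¹ ≤ (m * (1 + x ^ 2))⁻¹ := by
          exact inv_anti₀ hpos h2
      _ = m⁻¹ * (1 + x ^ 2)⁻¹ := by rw [mul_inv]
  exact base.comp_add_left θ

lemma aux_integral_exp_abs {c : ℝ} (hc : 0 < c) (θ : ℝ) :
    ∫ φ : ℝ, Real.exp (-(c * |θ + φ|)) = 2 / c := by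
  have ht : ∫ φ : ℝ, Real.exp (-(c * |θ + φ|)) = ∫ x : ℝ, Real.exp (-(c * |x|)) :=
    integral_add_left_eq_self (fun x : ℝ => Real.exp (-(c * |x|))) θ
  rw [ht, integral_comp_abs (f := fun x => Real.exp (-(c * x)))]
  have h := integral_rpow_mul_exp_neg_mul_Ioi (a := 1) one_pos hc
  simp only [sub_self, Real.rpow_zero, one_mul, Real.rpow_one, Real.Gamma_one, mul_one] at h
  rw [h]; ring
noncomputable def fI (δ θ : ℝ) : ℝ := ∫ φ : ℝ, Real.exp (-(δ/2) * φ^2) * Real.exp (-(1 * |θ + φ|))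

lemma fI_nonneg (δ θ : ℝ) : 0 ≤ fI δ θ :=
  integral_nonneg fun φ => by positivity

lemma g_cont (δ θ : ℝ) : Continuous fun φ : ℝ => Real.exp (-(δ/2) * φ^2) * Real.exp (-(1 * |θ + φ|)) := by
  fun_prop

lemma g_integrable {δ : ℝ} (hδ : 0 ≤ δ) (θ : ℝ) :
    Integrable (fun φ : ℝ => Real.exp (-(δ/2) * φ^2) * Real.exp (-(1 * |θ + φ|))) := by
  refine (aux_integrable_exp_abs one_pos θ).mono' (g_cont δ θ).aestronglyMeasurable ?_
  filter_upwards with φ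
  rw [Real.norm_eq_abs, abs_of_nonneg (by positivity)]
  have h1 : Real.exp (-(δ/2) * φ^2) ≤ 1 := Real.exp_le_one_iff.mpr (by nlinarith [sq_nonneg φ])
  nlinarith [Real.exp_nonneg (-(1 * |θ + φ|)), Real.exp_nonneg (-(δ/2) * φ^2)]

lemma fI_le_two {δ : ℝ} (hδ : 0 ≤ δ) (θ : ℝ) : fI δ θ ≤ 2 := by
  have h := integral_mono (g_integrable hδ θ) (aux_integrable_exp_abs one_pos θ)
    (fun φ => by
      have h1 : Real.exp (-(δ/2) * φ^2) ≤ 1 := Real.exp_le_one_iff.mpr (by nlinarith [sq_nonneg φ])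
      calc Real.exp (-(δ/2) * φ^2) * Real.exp (-(1 * |θ + φ|))
          ≤ 1 * Real.exp (-(1 * |θ + φ|)) := by
            exact mul_le_mul_of_nonneg_right h1 (Real.exp_nonneg _)
        _ = Real.exp (-(1 * |θ + φ|)) := one_mul _)
  rw [aux_integral_exp_abs one_pos θ] at h
  unfold fI; simpa using h

lemma fI_le_gauss {δ : ℝ} (hδ : 0 < δ) (θ : ℝ) : fI δ θ ≤ Real.sqrt (2 * π / δ) := by
  have hint : Integrable (fun φ : ℝ => Real.exp (-(δ/2) * φ^2)) :=
    integrable_exp_neg_mul_sq (by linarith)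
  have h := integral_mono (g_integrable hδ.le θ) hint
    (fun φ => by
      have h1 : Real.exp (-(1 * |θ + φ|)) ≤ 1 := Real.exp_le_one_iff.mpr (by nlinarith [abs_nonneg (θ + φ)])
      nlinarith [Real.exp_nonneg (-(δ/2) * φ^2), Real.exp_nonneg (-(1 * |θ + φ|))])
  rw [integral_gaussian] at h
  calc fI δ θ ≤ Real.sqrt (π / (δ/2)) := h
    _ = Real.sqrt (2 * π / δ) := by rw [div_div_eq_mul_div, mul_comm]

lemma abs_lower {θ φ : ℝ} (h : |φ| < |θ|/2) : |θ|/2 ≤ |θ + φ| := by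
  have h1 : |θ| ≤ |θ + φ| + |φ| := by
    have := abs_add_le (θ + φ) (-φ)
    simpa using this
  linarith

lemma gauss_exp_le {δ θ φ : ℝ} (hδ : 0 ≤ δ) (h : |θ|/2 ≤ |φ|) :
    Real.exp (-(δ/2) * φ^2) ≤ Real.exp (-(δ * θ^2/8)) := by
  apply Real.exp_le_exp.mpr
  have h2 : (|θ|/2)^2 ≤ |φ|^2 := by
    apply pow_le_pow_left₀ (by positivity) h
  rw [sq_abs] at h2
  have h3 : θ^2/4 ≤ φ^2 := by nlinarith [sq_abs θ]
  nlinarith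

lemma fI_le_splitA {δ : ℝ} (hδ : 0 ≤ δ) (θ : ℝ) :
    fI δ θ ≤ 2 * Real.exp (-(δ * θ^2/8)) + 4 * Real.exp (-(|θ|/4)) := by
  have hI1 : Integrable (fun φ : ℝ =>
      Real.exp (-(δ * θ^2/8)) * Real.exp (-(1 * |θ + φ|))) :=
    (aux_integrable_exp_abs one_pos θ).const_mul _
  have hI2 : Integrable (fun φ : ℝ =>
      Real.exp (-(|θ|/4)) * Real.exp (-((1/2 : ℝ) * |θ + φ|))) :=
    (aux_integrable_exp_abs (by norm_num) θ).const_mul _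
  have hpt : ∀ φ : ℝ, Real.exp (-(δ/2) * φ^2) * Real.exp (-(1 * |θ + φ|))
      ≤ Real.exp (-(δ * θ^2/8)) * Real.exp (-(1 * |θ + φ|))
        + Real.exp (-(|θ|/4)) * Real.exp (-((1/2 : ℝ) * |θ + φ|)) := by
    intro φ
    rcases le_or_gt (|θ|/2) |φ| with hc | hc
    · have h1 := gauss_exp_le hδ hc
      have : Real.exp (-(δ/2) * φ^2) * Real.exp (-(1 * |θ + φ|))
          ≤ Real.exp (-(δ * θ^2/8)) * Real.exp (-(1 * |θ + φ|)) :=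
        mul_le_mul_of_nonneg_right h1 (Real.exp_nonneg _)
      exact this.trans (le_add_of_nonneg_right (by positivity))
    · have h2 := abs_lower hc
      have hb : Real.exp (-(1 * |θ + φ|))
          ≤ Real.exp (-(|θ|/4)) * Real.exp (-((1/2 : ℝ) * |θ + φ|)) := by
        rw [show -(1 * |θ + φ|) = -((1/2 : ℝ) * |θ + φ|) + -((1/2 : ℝ) * |θ + φ|) by ring,
          Real.exp_add]
        exact mul_le_mul_of_nonneg_right
          (Real.exp_le_exp.mpr (by linarith)) (Real.exp_nonneg _)
      have ha : Real.exp (-(δ/2) * φ^2) ≤ 1 :=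
        Real.exp_le_one_iff.mpr (by nlinarith [sq_nonneg φ])
      have : Real.exp (-(δ/2) * φ^2) * Real.exp (-(1 * |θ + φ|))
          ≤ Real.exp (-(|θ|/4)) * Real.exp (-((1/2 : ℝ) * |θ + φ|)) := by
        calc Real.exp (-(δ/2) * φ^2) * Real.exp (-(1 * |θ + φ|))
            ≤ 1 * Real.exp (-(1 * |θ + φ|)) :=
              mul_le_mul_of_nonneg_right ha (Real.exp_nonneg _)
          _ = Real.exp (-(1 * |θ + φ|)) := one_mul _
          _ ≤ _ := hb
      exact this.trans (le_add_of_nonneg_left (by positivity))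
  calc fI δ θ ≤ ∫ φ : ℝ, (Real.exp (-(δ * θ^2/8)) * Real.exp (-(1 * |θ + φ|))
        + Real.exp (-(|θ|/4)) * Real.exp (-((1/2 : ℝ) * |θ + φ|))) :=
      integral_mono (g_integrable hδ θ) (hI1.add hI2) hpt
    _ = 2 * Real.exp (-(δ * θ^2/8)) + 4 * Real.exp (-(|θ|/4)) := by
      rw [integral_add hI1 hI2, integral_const_mul, integral_const_mul,
        aux_integral_exp_abs one_pos θ, aux_integral_exp_abs (by norm_num : (0:ℝ) < 1/2) θ]
      norm_num; ring

lemma fI_le_splitB {δ : ℝ} (hδ : 0 < δ) (θ : ℝ) :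
    fI δ θ ≤ 2 * Real.exp (-(δ * θ^2/8)) + Real.sqrt (2 * π / δ) * Real.exp (-(|θ|/2)) := by
  have hI1 : Integrable (fun φ : ℝ =>
      Real.exp (-(δ * θ^2/8)) * Real.exp (-(1 * |θ + φ|))) :=
    (aux_integrable_exp_abs one_pos θ).const_mul _
  have hI2 : Integrable (fun φ : ℝ =>
      Real.exp (-(|θ|/2)) * Real.exp (-(δ/2) * φ^2)) :=
    ((integrable_exp_neg_mul_sq (by linarith : (0:ℝ) < δ/2)).const_mul _)
  have hpt : ∀ φ : ℝ, Real.exp (-(δ/2) * φ^2) * Real.exp (-(1 * |θ + φ|))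
      ≤ Real.exp (-(δ * θ^2/8)) * Real.exp (-(1 * |θ + φ|))
        + Real.exp (-(|θ|/2)) * Real.exp (-(δ/2) * φ^2) := by
    intro φ
    rcases le_or_gt (|θ|/2) |φ| with hc | hc
    · have h1 := gauss_exp_le hδ.le hc
      have : Real.exp (-(δ/2) * φ^2) * Real.exp (-(1 * |θ + φ|))
          ≤ Real.exp (-(δ * θ^2/8)) * Real.exp (-(1 * |θ + φ|)) :=
        mul_le_mul_of_nonneg_right h1 (Real.exp_nonneg _)
      exact this.trans (le_add_of_nonneg_right (by positivity))
    · have h2 := abs_lower hc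
      have hb : Real.exp (-(1 * |θ + φ|)) ≤ Real.exp (-(|θ|/2)) :=
        Real.exp_le_exp.mpr (by linarith)
      have : Real.exp (-(δ/2) * φ^2) * Real.exp (-(1 * |θ + φ|))
          ≤ Real.exp (-(|θ|/2)) * Real.exp (-(δ/2) * φ^2) := by
        rw [mul_comm (Real.exp (-(|θ|/2)))]
        exact mul_le_mul_of_nonneg_left hb (Real.exp_nonneg _)
      exact this.trans (le_add_of_nonneg_left (by positivity))
  calc fI δ θ ≤ ∫ φ : ℝ, (Real.exp (-(δ * θ^2/8)) * Real.exp (-(1 * |θ + φ|))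
        + Real.exp (-(|θ|/2)) * Real.exp (-(δ/2) * φ^2)) :=
      integral_mono (g_integrable hδ.le θ) (hI1.add hI2) hpt
    _ = 2 * Real.exp (-(δ * θ^2/8)) + Real.sqrt (2 * π / δ) * Real.exp (-(|θ|/2)) := by
      rw [integral_add hI1 hI2, integral_const_mul, integral_const_mul,
        aux_integral_exp_abs one_pos θ, integral_gaussian,
        show π / (δ/2) = 2 * π / δ by ring]
      norm_num; ring

lemma inner_eq (δ θ₁ θ₂ : ℝ) :
    (∫ φ₂ : ℝ, ∫ φ₁ : ℝ,
        δ ^ (-(1:ℝ)/2) * Real.exp (-(δ / 2) * (φ₁ ^ 2 + φ₂ ^ 2)) *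
          Real.exp (-(|θ₁ + φ₁| + |θ₂ + φ₂|)))
      = δ ^ (-(1:ℝ)/2) * (fI δ θ₁ * fI δ θ₂) := by
  have step1 : ∀ φ₂ : ℝ, (∫ φ₁ : ℝ,
      δ ^ (-(1:ℝ)/2) * Real.exp (-(δ / 2) * (φ₁ ^ 2 + φ₂ ^ 2)) *
        Real.exp (-(|θ₁ + φ₁| + |θ₂ + φ₂|)))
      = (δ ^ (-(1:ℝ)/2) * (Real.exp (-(δ/2) * φ₂^2) * Real.exp (-(1 * |θ₂ + φ₂|)))) * fI δ θ₁ := by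
    intro φ₂
    unfold fI
    rw [← integral_const_mul]
    congr 1; funext φ₁
    rw [show -(δ / 2) * (φ₁ ^ 2 + φ₂ ^ 2) = (-(δ/2) * φ₁^2) + (-(δ/2) * φ₂^2) by ring,
      Real.exp_add,
      show -(|θ₁ + φ₁| + |θ₂ + φ₂|) = -(1 * |θ₁ + φ₁|) + -(1 * |θ₂ + φ₂|) by ring,
      Real.exp_add]
    ring
  calc (∫ φ₂ : ℝ, ∫ φ₁ : ℝ,
        δ ^ (-(1:ℝ)/2) * Real.exp (-(δ / 2) * (φ₁ ^ 2 + φ₂ ^ 2)) *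
          Real.exp (-(|θ₁ + φ₁| + |θ₂ + φ₂|)))
      = ∫ φ₂ : ℝ, (δ ^ (-(1:ℝ)/2) * fI δ θ₁) *
          (Real.exp (-(δ/2) * φ₂^2) * Real.exp (-(1 * |θ₂ + φ₂|))) := by
        congr 1; funext φ₂; rw [step1 φ₂]; ring
    _ = (δ ^ (-(1:ℝ)/2) * fI δ θ₁) * fI δ θ₂ := integral_const_mul _ _
    _ = δ ^ (-(1:ℝ)/2) * (fI δ θ₁ * fI δ θ₂) := by ring

lemma split_Ioi_int {g : ℝ → ℝ} (hg1 : IntegrableOn g (Ioc 0 1)) (hg2 : IntegrableOn g (Ioi 1)) :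
    IntegrableOn g (Ioi (0:ℝ)) ∧
      (∫ x in Ioi (0:ℝ), g x) = (∫ x in Ioc (0:ℝ) 1, g x) + ∫ x in Ioi (1:ℝ), g x := by
  have hu : Ioc (0:ℝ) 1 ∪ Ioi 1 = Ioi 0 := Ioc_union_Ioi_eq_Ioi zero_le_one
  constructor
  · rw [← hu]; exact hg1.union hg2
  · rw [← hu, setIntegral_union Ioc_disjoint_Ioi_same measurableSet_Ioi hg1 hg2]

lemma int_half_Ioc : IntegrableOn (fun x : ℝ => x ^ (-(1:ℝ)/2)) (Ioc 0 1) := by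
  have h := intervalIntegral.intervalIntegrable_rpow' (a := 0) (b := 1) (by norm_num : (-1:ℝ) < -(1:ℝ)/2)
  exact (intervalIntegrable_iff_integrableOn_Ioc_of_le zero_le_one).mp h

open intervalIntegral in
lemma val_half_Ioc : (∫ x in Ioc (0:ℝ) 1, x ^ (-(1:ℝ)/2)) = 2 := by
  rw [← intervalIntegral.integral_of_le zero_le_one,
    integral_rpow (Or.inl (by norm_num : (-1:ℝ) < -(1:ℝ)/2))]
  norm_num

lemma int_32_Ioi : IntegrableOn (fun x : ℝ => x ^ (-(3:ℝ)/2)) (Ioi 1) := by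
  have := integrableOn_Ioi_rpow_of_lt (by norm_num : (-(3:ℝ)/2) < -1) one_pos
  exact this

lemma val_32_Ioi : (∫ x in Ioi (1:ℝ), x ^ (-(3:ℝ)/2)) = 2 := by
  rw [integral_Ioi_rpow_of_lt (by norm_num : (-(3:ℝ)/2) < -1) one_pos]
  norm_num

lemma gamma_half_integrable {r : ℝ} (hr : 0 < r) :
    IntegrableOn (fun δ : ℝ => δ ^ (-(1:ℝ)/2) * Real.exp (-(r * δ))) (Ioi 0) := by
  have h1 : IntegrableOn (fun δ : ℝ => δ ^ (-(1:ℝ)/2) * Real.exp (-(r * δ))) (Ioc 0 1) := by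
    have hcont : ContinuousOn (fun δ : ℝ => δ ^ (-(1:ℝ)/2) * Real.exp (-(r * δ))) (Ioc 0 1) :=
      (continuousOn_id.rpow_const fun x hx => Or.inl (ne_of_gt hx.1)).mul
        (Continuous.continuousOn (by fun_prop))
    refine int_half_Ioc.mono' (hcont.aestronglyMeasurable measurableSet_Ioc) ?_
    rw [ae_restrict_iff' measurableSet_Ioc]
    refine ae_of_all _ fun δ hδ => ?_
    rw [Real.norm_eq_abs, abs_of_nonneg (mul_nonneg (Real.rpow_nonneg hδ.1.le _) (Real.exp_nonneg _))]
    have he : Real.exp (-(r * δ)) ≤ 1 :=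
      Real.exp_le_one_iff.mpr (by nlinarith [hδ.1.le, hr.le])
    nlinarith [Real.rpow_nonneg hδ.1.le (-(1:ℝ)/2), Real.exp_nonneg (-(r * δ))]
  have h2 : IntegrableOn (fun δ : ℝ => δ ^ (-(1:ℝ)/2) * Real.exp (-(r * δ))) (Ioi 1) := by
    have hbase : IntegrableOn (fun δ : ℝ => Real.exp (-(r * δ))) (Ioi 1) := by
      have := exp_neg_integrableOn_Ioi 1 hr
      simpa [neg_mul] using this
    have hcont : ContinuousOn (fun δ : ℝ => δ ^ (-(1:ℝ)/2) * Real.exp (-(r * δ))) (Ioi 1) :=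
      (continuousOn_id.rpow_const fun x hx => Or.inl (by exact ne_of_gt (lt_trans one_pos hx))).mul
        (Continuous.continuousOn (by fun_prop))
    refine hbase.mono' (hcont.aestronglyMeasurable measurableSet_Ioi) ?_
    rw [ae_restrict_iff' measurableSet_Ioi]
    refine ae_of_all _ fun δ hδ => ?_
    have hδ1 : (1:ℝ) ≤ δ := le_of_lt hδ
    rw [Real.norm_eq_abs, abs_of_nonneg (mul_nonneg (Real.rpow_nonneg (by linarith) _) (Real.exp_nonneg _))]
    have hp : δ ^ (-(1:ℝ)/2) ≤ 1 :=
      Real.rpow_le_one_of_one_le_of_nonpos hδ1 (by norm_num)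
    nlinarith [Real.exp_nonneg (-(r * δ)), Real.rpow_nonneg (by linarith : (0:ℝ) ≤ δ) (-(1:ℝ)/2)]
  rw [show Ioi (0:ℝ) = Ioc 0 1 ∪ Ioi 1 from (Ioc_union_Ioi_eq_Ioi zero_le_one).symm]
  exact h1.union h2

lemma gamma_half_value {r : ℝ} (hr : 0 < r) :
    (∫ δ in Ioi (0:ℝ), δ ^ (-(1:ℝ)/2) * Real.exp (-(r * δ)))
      = (1/r) ^ ((1:ℝ)/2) * Real.Gamma (1/2) := by
  have h := integral_rpow_mul_exp_neg_mul_Ioi (a := 1/2) (by norm_num : (0:ℝ) < 1/2) hr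
  rw [show (-(1:ℝ)/2) = ((1:ℝ)/2 - 1) by norm_num]
  exact h

lemma rpow_combine {δ : ℝ} (hδ : 0 < δ) : δ ^ (-(1:ℝ)/2) * δ⁻¹ = δ ^ (-(3:ℝ)/2) := by
  rw [show δ⁻¹ = δ ^ (-1 : ℝ) by rw [Real.rpow_neg_one],
    ← Real.rpow_add hδ]
  norm_num

lemma sqrt_two_pi_le : Real.sqrt (2 * π) ≤ 3 := by
  nlinarith [Real.sq_sqrt (by positivity : (0:ℝ) ≤ 2 * π), Real.sqrt_nonneg (2 * π),
    Real.pi_le_four]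

lemma two_le_sqrt_two_pi : (2:ℝ) ≤ Real.sqrt (2 * π) := by
  nlinarith [Real.sq_sqrt (by positivity : (0:ℝ) ≤ 2 * π), Real.sqrt_nonneg (2 * π),
    Real.pi_gt_three]

lemma exp_neg_le_inv {x : ℝ} (hx : 0 < x) : Real.exp (-x) ≤ x⁻¹ := by
  rw [Real.exp_neg]
  apply inv_anti₀ hx
  have := Real.add_one_le_exp x
  linarith

lemma caseA (θ₁ θ₂ : ℝ) :
    (∫ δ in Ioi (0:ℝ), δ ^ (-(1:ℝ)/2) * (fI δ θ₁ * fI δ θ₂)) ≤ 8 + 4 * π := by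
  set hA : ℝ → ℝ := fun δ =>
    if δ ≤ 1 then 4 * δ ^ (-(1:ℝ)/2) else (2*π) * δ ^ (-(3:ℝ)/2) with hAdef
  have h1 : IntegrableOn hA (Ioc 0 1) := by
    refine IntegrableOn.congr_fun (int_half_Ioc.const_mul 4) ?_ measurableSet_Ioc
    intro x hx; simp [hAdef, if_pos hx.2]
  have h2 : IntegrableOn hA (Ioi 1) := by
    refine IntegrableOn.congr_fun (int_32_Ioi.const_mul (2*π)) ?_ measurableSet_Ioi
    intro x hx; simp [hAdef, if_neg (not_le.mpr (show (1:ℝ) < x from hx))]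
  obtain ⟨hint, hval⟩ := split_Ioi_int h1 h2
  have hbound : (∫ δ in Ioi (0:ℝ), δ ^ (-(1:ℝ)/2) * (fI δ θ₁ * fI δ θ₂))
      ≤ ∫ δ in Ioi (0:ℝ), hA δ := by
    refine integral_mono_of_nonneg ?_ hint ?_
    · exact (ae_restrict_iff' measurableSet_Ioi).mpr (ae_of_all _ fun δ hδ =>
        mul_nonneg (Real.rpow_nonneg (le_of_lt hδ) _)
          (mul_nonneg (fI_nonneg _ _) (fI_nonneg _ _)))
    · refine (ae_restrict_iff' measurableSet_Ioi).mpr (ae_of_all _ fun δ hδ => ?_)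
      have hδpos : (0:ℝ) < δ := hδ
      by_cases hδ1 : δ ≤ 1
      · have hprod : fI δ θ₁ * fI δ θ₂ ≤ 4 := by
          have := fI_le_two hδpos.le θ₁
          have := fI_le_two hδpos.le θ₂
          nlinarith [fI_nonneg δ θ₁, fI_nonneg δ θ₂]
        calc δ ^ (-(1:ℝ)/2) * (fI δ θ₁ * fI δ θ₂)
            ≤ δ ^ (-(1:ℝ)/2) * 4 :=
              mul_le_mul_of_nonneg_left hprod (Real.rpow_nonneg hδpos.le _)
          _ = hA δ := by simp [hAdef, if_pos hδ1]; ring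
      · have hnn : (0:ℝ) ≤ 2 * π / δ := by positivity
        have hprod : fI δ θ₁ * fI δ θ₂ ≤ 2 * π / δ := by
          have g1 := fI_le_gauss hδpos θ₁
          have g2 := fI_le_gauss hδpos θ₂
          calc fI δ θ₁ * fI δ θ₂
              ≤ Real.sqrt (2*π/δ) * Real.sqrt (2*π/δ) :=
                mul_le_mul g1 g2 (fI_nonneg _ _) (Real.sqrt_nonneg _)
            _ = 2 * π / δ := Real.mul_self_sqrt hnn
        calc δ ^ (-(1:ℝ)/2) * (fI δ θ₁ * fI δ θ₂)
            ≤ δ ^ (-(1:ℝ)/2) * (2 * π / δ) :=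
              mul_le_mul_of_nonneg_left hprod (Real.rpow_nonneg hδpos.le _)
          _ = (2*π) * (δ ^ (-(1:ℝ)/2) * δ⁻¹) := by ring
          _ = hA δ := by rw [rpow_combine hδpos]; simp [hAdef, if_neg hδ1]
  have hv1 : (∫ δ in Ioc (0:ℝ) 1, hA δ) = 8 := by
    rw [setIntegral_congr_fun measurableSet_Ioc
      (fun x hx => by simp [hAdef, if_pos hx.2] : EqOn hA (fun x => 4 * x ^ (-(1:ℝ)/2)) (Ioc 0 1)),
      integral_const_mul, val_half_Ioc]
    norm_num
  have hv2 : (∫ δ in Ioi (1:ℝ), hA δ) = 4 * π := by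
    rw [setIntegral_congr_fun measurableSet_Ioi
      (fun x hx => by simp [hAdef, if_neg (not_le.mpr (show (1:ℝ) < x from hx))] :
        EqOn hA (fun x => (2*π) * x ^ (-(3:ℝ)/2)) (Ioi 1)),
      integral_const_mul, val_32_Ioi]
    ring
  rw [hval, hv1, hv2] at hbound
  exact hbound

lemma caseB {θ₁ : ℝ} (ht : 1 ≤ |θ₁|) (θ₂ : ℝ) :
    (∫ δ in Ioi (0:ℝ), δ ^ (-(1:ℝ)/2) * (fI δ θ₁ * fI δ θ₂)) ≤ 150 / |θ₁| := by
  set t := |θ₁| with htdef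
  have htpos : (0:ℝ) < t := lt_of_lt_of_le one_pos ht
  set r := θ₁^2/8 with hrdef
  have hrpos : 0 < r := by
    have : 1 ≤ θ₁^2 := by nlinarith [sq_abs θ₁]
    rw [hrdef]; linarith
  set hB : ℝ → ℝ := fun δ =>
    (2 * Real.sqrt (2*π)) * (δ ^ (-(1:ℝ)/2) * Real.exp (-(r * δ)))
      + (if δ ≤ 1 then (8 * Real.exp (-(t/4))) * δ ^ (-(1:ℝ)/2)
         else ((2*π) * Real.exp (-(t/2))) * δ ^ (-(3:ℝ)/2)) with hBdef
  set hC : ℝ → ℝ := fun δ =>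
    (if δ ≤ 1 then (8 * Real.exp (-(t/4))) * δ ^ (-(1:ℝ)/2)
     else ((2*π) * Real.exp (-(t/2))) * δ ^ (-(3:ℝ)/2)) with hCdef
  have hC1 : IntegrableOn hC (Ioc 0 1) := by
    refine IntegrableOn.congr_fun (int_half_Ioc.const_mul (8 * Real.exp (-(t/4)))) ?_
      measurableSet_Ioc
    intro x hx; simp [hCdef, if_pos hx.2]
  have hC2 : IntegrableOn hC (Ioi 1) := by
    refine IntegrableOn.congr_fun (int_32_Ioi.const_mul ((2*π) * Real.exp (-(t/2)))) ?_
      measurableSet_Ioi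
    intro x hx; simp [hCdef, if_neg (not_le.mpr (show (1:ℝ) < x from hx))]
  obtain ⟨hCint, hCval⟩ := split_Ioi_int hC1 hC2
  have hGint : IntegrableOn
      (fun δ : ℝ => (2 * Real.sqrt (2*π)) * (δ ^ (-(1:ℝ)/2) * Real.exp (-(r * δ)))) (Ioi 0) :=
    (gamma_half_integrable hrpos).const_mul _
  have hBint : IntegrableOn hB (Ioi 0) := hGint.add hCint
  have hbound : (∫ δ in Ioi (0:ℝ), δ ^ (-(1:ℝ)/2) * (fI δ θ₁ * fI δ θ₂))
      ≤ ∫ δ in Ioi (0:ℝ), hB δ := by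
    refine integral_mono_of_nonneg
      ((ae_restrict_iff' measurableSet_Ioi).mpr (ae_of_all _ fun δ hδ =>
        mul_nonneg (Real.rpow_nonneg (le_of_lt hδ) _)
          (mul_nonneg (fI_nonneg _ _) (fI_nonneg _ _)))) hBint
      ((ae_restrict_iff' measurableSet_Ioi).mpr (ae_of_all _ fun δ hδ => ?_))
    have hδpos : (0:ℝ) < δ := hδ
    have hrp : -(δ * θ₁^2/8) = -(r * δ) := by rw [hrdef]; ring
    by_cases hδ1 : δ ≤ 1
    · have h1 := fI_le_splitA hδpos.le θ₁
      rw [hrp] at h1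
      have h2 := fI_le_two hδpos.le θ₂
      have hprod : fI δ θ₁ * fI δ θ₂
          ≤ (2 * Real.exp (-(r * δ)) + 4 * Real.exp (-(t/4))) * 2 :=
        mul_le_mul h1 h2 (fI_nonneg _ _) (by positivity)
      have hkey : (4:ℝ) ≤ 2 * Real.sqrt (2*π) := by linarith [two_le_sqrt_two_pi]
      have hP : (0:ℝ) ≤ δ ^ (-(1:ℝ)/2) * Real.exp (-(r * δ)) :=
        mul_nonneg (Real.rpow_nonneg hδpos.le _) (Real.exp_nonneg _)
      calc δ ^ (-(1:ℝ)/2) * (fI δ θ₁ * fI δ θ₂)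
          ≤ δ ^ (-(1:ℝ)/2) * ((2 * Real.exp (-(r * δ)) + 4 * Real.exp (-(t/4))) * 2) :=
            mul_le_mul_of_nonneg_left hprod (Real.rpow_nonneg hδpos.le _)
        _ = 4 * (δ ^ (-(1:ℝ)/2) * Real.exp (-(r * δ)))
            + (8 * Real.exp (-(t/4))) * δ ^ (-(1:ℝ)/2) := by ring
        _ ≤ hB δ := by
            rw [hBdef]
            simp only [if_pos hδ1]
            nlinarith [hkey, hP]
    · have hδgt : (1:ℝ) < δ := not_le.mp hδ1
      have h1 := fI_le_splitB hδpos θ₁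
      rw [hrp] at h1
      have h2 := fI_le_gauss hδpos θ₂
      have hs_nonneg : (0:ℝ) ≤ Real.sqrt (2*π/δ) := Real.sqrt_nonneg _
      have hprod : fI δ θ₁ * fI δ θ₂
          ≤ (2 * Real.exp (-(r * δ)) + Real.sqrt (2*π/δ) * Real.exp (-(t/2)))
              * Real.sqrt (2*π/δ) :=
        mul_le_mul h1 h2 (fI_nonneg _ _) (by positivity)
      have hsle : Real.sqrt (2*π/δ) ≤ Real.sqrt (2*π) :=
        Real.sqrt_le_sqrt (by
          rw [div_le_iff₀ hδpos]; nlinarith [Real.pi_pos])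
      have hss : Real.sqrt (2*π/δ) * Real.sqrt (2*π/δ) = 2*π/δ :=
        Real.mul_self_sqrt (by positivity)
      have hP : (0:ℝ) ≤ δ ^ (-(1:ℝ)/2) * Real.exp (-(r * δ)) :=
        mul_nonneg (Real.rpow_nonneg hδpos.le _) (Real.exp_nonneg _)
      calc δ ^ (-(1:ℝ)/2) * (fI δ θ₁ * fI δ θ₂)
          ≤ δ ^ (-(1:ℝ)/2) * ((2 * Real.exp (-(r * δ))
              + Real.sqrt (2*π/δ) * Real.exp (-(t/2))) * Real.sqrt (2*π/δ)) :=
            mul_le_mul_of_nonneg_left hprod (Real.rpow_nonneg hδpos.le _)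
        _ = 2 * (Real.sqrt (2*π/δ) * (δ ^ (-(1:ℝ)/2) * Real.exp (-(r * δ))))
            + (Real.sqrt (2*π/δ) * Real.sqrt (2*π/δ))
              * (Real.exp (-(t/2)) * δ ^ (-(1:ℝ)/2)) := by ring
        _ ≤ 2 * (Real.sqrt (2*π) * (δ ^ (-(1:ℝ)/2) * Real.exp (-(r * δ))))
            + (2*π/δ) * (Real.exp (-(t/2)) * δ ^ (-(1:ℝ)/2)) := by
            rw [hss]
            have := mul_le_mul_of_nonneg_right hsle hP
            linarith
        _ = (2 * Real.sqrt (2*π)) * (δ ^ (-(1:ℝ)/2) * Real.exp (-(r * δ)))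
            + ((2*π) * Real.exp (-(t/2))) * (δ ^ (-(1:ℝ)/2) * δ⁻¹) := by ring
        _ = hB δ := by
            rw [rpow_combine hδpos, hBdef]
            simp only [if_neg hδ1]
  have hGval := gamma_half_value hrpos
  have hv1 : (∫ δ in Ioc (0:ℝ) 1, hC δ) = 16 * Real.exp (-(t/4)) := by
    rw [setIntegral_congr_fun measurableSet_Ioc
      (fun x hx => by simp [hCdef, if_pos hx.2] :
        EqOn hC (fun x => (8 * Real.exp (-(t/4))) * x ^ (-(1:ℝ)/2)) (Ioc 0 1)),
      integral_const_mul, val_half_Ioc]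
    ring
  have hv2 : (∫ δ in Ioi (1:ℝ), hC δ) = 4 * π * Real.exp (-(t/2)) := by
    rw [setIntegral_congr_fun measurableSet_Ioi
      (fun x hx => by simp [hCdef, if_neg (not_le.mpr (show (1:ℝ) < x from hx))] :
        EqOn hC (fun x => ((2*π) * Real.exp (-(t/2))) * x ^ (-(3:ℝ)/2)) (Ioi 1)),
      integral_const_mul, val_32_Ioi]
    ring
  have hBval : (∫ δ in Ioi (0:ℝ), hB δ)
      = (2 * Real.sqrt (2*π)) * ((1/r) ^ ((1:ℝ)/2) * Real.Gamma (1/2))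
        + (16 * Real.exp (-(t/4)) + 4 * π * Real.exp (-(t/2))) := by
    rw [hBdef]
    rw [integral_add hGint hCint, integral_const_mul, hGval, hCval, hv1, hv2]
  -- numeric bounds
  have hb2 : (1/r) ^ ((1:ℝ)/2) ≤ 3 / t := by
    have h8 : (1:ℝ)/r = 8/θ₁^2 := by rw [hrdef]; field_simp
    rw [h8, ← Real.sqrt_eq_rpow, Real.sqrt_div (by norm_num : (0:ℝ) ≤ 8), Real.sqrt_sq_eq_abs]
    have h83 : Real.sqrt 8 ≤ 3 := by
      nlinarith [Real.sq_sqrt (by norm_num : (0:ℝ) ≤ 8), Real.sqrt_nonneg 8]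
    exact (div_le_div_iff_of_pos_right htpos).mpr h83
  have hΓnn : (0:ℝ) ≤ Real.Gamma (1/2) := by
    rw [Real.Gamma_one_half_eq]; exact Real.sqrt_nonneg _
  have hb3 : Real.Gamma (1/2) ≤ 2 := by
    rw [Real.Gamma_one_half_eq]
    nlinarith [Real.sq_sqrt Real.pi_pos.le, Real.sqrt_nonneg π, Real.pi_le_four]
  have hb1 : 2 * Real.sqrt (2*π) ≤ 6 := by linarith [sqrt_two_pi_le]
  have hterm1 : (2 * Real.sqrt (2*π)) * ((1/r) ^ ((1:ℝ)/2) * Real.Gamma (1/2))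
      ≤ 6 * ((3/t) * 2) := by
    refine mul_le_mul hb1 (mul_le_mul hb2 hb3 hΓnn (by positivity)) ?_ (by norm_num)
    exact mul_nonneg (Real.rpow_nonneg (by positivity) _) hΓnn
  have he1 : Real.exp (-(t/4)) ≤ 4/t := by
    have := exp_neg_le_inv (x := t/4) (by linarith)
    rwa [inv_div] at this
  have he2 : Real.exp (-(t/2)) ≤ 2/t := by
    have := exp_neg_le_inv (x := t/2) (by linarith)
    rwa [inv_div] at this
  have c1 : 16 * Real.exp (-(t/4)) ≤ 64/t := by
    calc 16 * Real.exp (-(t/4)) ≤ 16 * (4/t) :=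
          mul_le_mul_of_nonneg_left he1 (by norm_num)
      _ = 64/t := by ring
  have c2 : 4 * π * Real.exp (-(t/2)) ≤ 32/t := by
    calc 4 * π * Real.exp (-(t/2)) ≤ 4 * π * (2/t) :=
          mul_le_mul_of_nonneg_left he2 (by positivity)
      _ = (8*π)/t := by ring
      _ ≤ 32/t := by
          exact (div_le_div_iff_of_pos_right htpos).mpr (by nlinarith [Real.pi_le_four])
  have hq : 36/t + 64/t + 32/t ≤ 150/t := by
    rw [← add_div, ← add_div]
    exact (div_le_div_iff_of_pos_right htpos).mpr (by norm_num)
  have h36 : 6 * ((3/t) * 2) = 36/t := by ring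
  rw [hBval] at hbound
  linarith

theorem daily_effect_marginalization_bound :
    ∃ K > 0, ∀ θ₁ θ₂ : ℝ,
      (∫ δ in Set.Ioi (0:ℝ), ∫ φ₂ : ℝ, ∫ φ₁ : ℝ,
          δ ^ (-(1:ℝ)/2) * Real.exp (-(δ / 2) * (φ₁ ^ 2 + φ₂ ^ 2)) *
            Real.exp (-(|θ₁ + φ₁| + |θ₂ + φ₂|))) ≤
        K / (1 + |θ₁|) := by
  refine ⟨300, by norm_num, fun θ₁ θ₂ => ?_⟩
  have hrw : (∫ δ in Set.Ioi (0:ℝ), ∫ φ₂ : ℝ, ∫ φ₁ : ℝ,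
        δ ^ (-(1:ℝ)/2) * Real.exp (-(δ / 2) * (φ₁ ^ 2 + φ₂ ^ 2)) *
          Real.exp (-(|θ₁ + φ₁| + |θ₂ + φ₂|)))
      = ∫ δ in Ioi (0:ℝ), δ ^ (-(1:ℝ)/2) * (fI δ θ₁ * fI δ θ₂) :=
    setIntegral_congr_fun measurableSet_Ioi fun δ _ => inner_eq δ θ₁ θ₂
  rw [hrw]
  rcases le_or_gt (|θ₁|) 1 with hc | hc
  · have h := caseA θ₁ θ₂
    have h2 : (8:ℝ) + 4*π ≤ 300/(1+|θ₁|) := by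
      rw [le_div_iff₀ (by positivity)]
      nlinarith [Real.pi_le_four, abs_nonneg θ₁]
    linarith
  · have h := caseB hc.le θ₂
    have h2 : 150/|θ₁| ≤ 300/(1+|θ₁|) := by
      rw [div_le_div_iff₀ (by positivity) (by positivity)]
      nlinarith [abs_nonneg θ₁]
    linarith
end

section
/- For any real B > 0 and A ∈ ℝ, the integral ∫_{-∞}^{∞} (1/(1+|√B · z + A|)) e^{-z²/2} dz is finite, and more strongly, for fixed positive weights Δ₁,…,Δ_T (T ≥ 2), positive truncated lapses Δ₁⁺,…,Δ_T⁺, ρ > 0, μ ∈ ℝ, V > 0 and φ > 0, setting A(c) = μ·∏_{t=1}^T(1-cρΔ_t⁺) + Σ_{t=1}^T cΔ_t⁺ ∏_{i=t+1}^T(1-cρΔ_i⁺) and B(c) = Σ_{t=1}^T Δ_t ∏_{i=t+1}^T(1-cρΔ_i⁺)² + φV ∏_{t=1}^T(1-cρΔ_t⁺)², the double integral ∫₀^∞ ∫_{-∞}^{∞} (1/(1+|√(B(c)/φ)·z + A(c)|)) e^{-z²/2} dz dc is finite. -/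
open MeasureTheory Finset Real Set

lemma lem5_int_gauss : Integrable (fun z : ℝ => Real.exp (-z ^ 2 / 2)) := by
  have h := integrable_exp_neg_mul_sq (b := (1:ℝ)/2) (by norm_num)
  refine h.congr (ae_of_all _ fun z => ?_)
  ring_nf

lemma lem5_part1 (a b : ℝ) :
    Integrable (fun z : ℝ => (1 + |a * z + b|)⁻¹ * Real.exp (-z ^ 2 / 2)) := by
  apply lem5_int_gauss.mono'
  · have hc : Continuous fun z : ℝ => (1 + |a * z + b|)⁻¹ :=
      Continuous.inv₀ (by continuity) (fun z => by positivity)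
    exact (hc.mul (by continuity)).aestronglyMeasurable
  · refine ae_of_all _ fun z => ?_
    rw [Real.norm_of_nonneg (by positivity)]
    apply mul_le_of_le_one_left (Real.exp_nonneg _)
    apply inv_le_one_of_one_le₀
    simp [abs_nonneg]

lemma lem5_inv_le_rpow {x : ℝ} (hx : 0 < x) : (1 + x)⁻¹ ≤ x ^ (-(3/4) : ℝ) := by
  rw [Real.rpow_neg hx.le]
  have h34 : x ^ ((3:ℝ)/4) ≤ 1 + x := by
    rcases le_total x 1 with h | h
    · have := Real.rpow_le_one hx.le h (by norm_num : (0:ℝ) ≤ 3/4)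
      linarith
    · have := Real.rpow_le_rpow_of_exponent_le h (by norm_num : (3:ℝ)/4 ≤ 1)
      rw [Real.rpow_one] at this
      linarith
  exact inv_anti₀ (Real.rpow_pos_of_pos hx _) h34

lemma lem5_ind_shift (z₀ z : ℝ) :
    (Set.Icc (z₀ - 1) (z₀ + 1)).indicator (fun w => |w - z₀| ^ (-(3/4) : ℝ)) z
      = (Set.Icc (-1 : ℝ) 1).indicator (fun u => |u| ^ (-(3/4) : ℝ)) (z - z₀) := by
  have hmem : z ∈ Set.Icc (z₀ - 1) (z₀ + 1) ↔ z - z₀ ∈ Set.Icc (-1 : ℝ) 1 := by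
    simp only [Set.mem_Icc]; constructor <;> intro h <;> constructor <;> linarith [h.1, h.2]
  by_cases h : z ∈ Set.Icc (z₀ - 1) (z₀ + 1)
  · rw [Set.indicator_of_mem h, Set.indicator_of_mem (hmem.1 h)]
  · rw [Set.indicator_of_notMem h, Set.indicator_of_notMem (fun hh => h (hmem.2 hh))]

lemma lem5_base_on : IntegrableOn (fun u : ℝ => |u| ^ (-(3/4) : ℝ)) (Set.Icc (-1 : ℝ) 1) := by
  have hpos : IntegrableOn (fun u : ℝ => |u| ^ (-(3/4) : ℝ)) (Set.Icc (0 : ℝ) 1) := by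
    have h1 : IntervalIntegrable (fun x : ℝ => x ^ (-(3/4) : ℝ)) volume 0 1 :=
      intervalIntegral.intervalIntegrable_rpow' (by norm_num)
    have h2 : IntegrableOn (fun x : ℝ => x ^ (-(3/4) : ℝ)) (Set.Icc (0 : ℝ) 1) :=
      (intervalIntegrable_iff_integrableOn_Icc_of_le zero_le_one).mp h1
    exact h2.congr_fun (fun u hu => by rw [abs_of_nonneg hu.1]) measurableSet_Icc
  have hneg : IntegrableOn (fun u : ℝ => |u| ^ (-(3/4) : ℝ)) (Set.Icc (-1 : ℝ) 0) := by
    rw [show Set.Icc (-1 : ℝ) 0 = Neg.neg ⁻¹' (Set.Icc (0 : ℝ) 1) by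
      ext x
      simp only [Set.mem_preimage, Set.mem_Icc]
      constructor <;> intro h <;> exact ⟨by linarith [h.1, h.2], by linarith [h.1, h.2]⟩]
    rw [← (Measure.measurePreserving_neg (volume : Measure ℝ)).integrableOn_comp_preimage
      (Homeomorph.neg ℝ).measurableEmbedding]
    rw [show Neg.neg ⁻¹' (Neg.neg ⁻¹' (Set.Icc (0:ℝ) 1)) = Set.Icc (0:ℝ) 1 by ext x; simp]
    exact hpos.congr_fun (fun u _ => by simp [Function.comp, abs_neg]) measurableSet_Icc
  have : Set.Icc (-1 : ℝ) 1 = Set.Icc (-1 : ℝ) 0 ∪ Set.Icc 0 1 := by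
    rw [Set.Icc_union_Icc_eq_Icc] <;> norm_num
  rw [this]
  exact hneg.union hpos

lemma lem5_base_integrable :
    Integrable ((Set.Icc (-1 : ℝ) 1).indicator (fun u => |u| ^ (-(3/4) : ℝ))) :=
  lem5_base_on.integrable_indicator measurableSet_Icc

noncomputable def lem5C1 : ℝ := ∫ z : ℝ, Real.exp (-z ^ 2 / 2)

noncomputable def lem5C0 : ℝ :=
  ∫ u : ℝ, (Set.Icc (-1 : ℝ) 1).indicator (fun u => |u| ^ (-(3/4) : ℝ)) u

noncomputable def lem5H (z₀ z : ℝ) : ℝ :=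
  (Set.Icc (z₀ - 1) (z₀ + 1)).indicator (fun w => |w - z₀| ^ (-(3/4) : ℝ)) z
    + Real.exp (-z ^ 2 / 2)

lemma lem5H_shift_integrable (z₀ : ℝ) :
    Integrable (fun z : ℝ =>
      (Set.Icc (z₀ - 1) (z₀ + 1)).indicator (fun w => |w - z₀| ^ (-(3/4) : ℝ)) z) := by
  simp only [lem5_ind_shift]
  exact lem5_base_integrable.comp_sub_right z₀

lemma lem5H_integrable (z₀ : ℝ) : Integrable (lem5H z₀) :=
  (lem5H_shift_integrable z₀).add lem5_int_gauss

lemma lem5H_integral (z₀ : ℝ) : (∫ z : ℝ, lem5H z₀ z) = lem5C0 + lem5C1 := by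
  unfold lem5H
  rw [integral_add (lem5H_shift_integrable z₀) lem5_int_gauss]
  congr 1
  simp only [lem5_ind_shift]
  exact integral_sub_right_eq_self
    ((Set.Icc (-1 : ℝ) 1).indicator (fun u => |u| ^ (-(3/4) : ℝ))) z₀

lemma lem5H_bound (z₀ z : ℝ) :
    |z - z₀| ^ (-(3/4) : ℝ) * Real.exp (-z ^ 2 / 2) ≤ lem5H z₀ z := by
  unfold lem5H
  by_cases h : z ∈ Set.Icc (z₀ - 1) (z₀ + 1)
  · rw [Set.indicator_of_mem h]
    have h1 : |z - z₀| ^ (-(3/4) : ℝ) * Real.exp (-z ^ 2 / 2)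
        ≤ |z - z₀| ^ (-(3/4) : ℝ) * 1 := by
      apply mul_le_mul_of_nonneg_left _ (Real.rpow_nonneg (abs_nonneg _) _)
      exact Real.exp_le_one_iff.2 (by nlinarith [sq_nonneg z])
    have h2 := Real.exp_nonneg (-z ^ 2 / 2)
    linarith
  · rw [Set.indicator_of_notMem h]
    have h1 : (1 : ℝ) < |z - z₀| := by
      simp only [Set.mem_Icc, not_and_or, not_le] at h
      rcases h with h | h
      · rw [abs_sub_comm, lt_abs]; left; linarith
      · rw [lt_abs]; left; linarith
    have h2 : |z - z₀| ^ (-(3/4) : ℝ) ≤ 1 :=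
      Real.rpow_le_one_of_one_le_of_nonpos h1.le (by norm_num)
    have := mul_le_of_le_one_left (Real.exp_nonneg (-z ^ 2 / 2)) h2
    linarith

lemma lem5_key {s : ℝ} (A : ℝ) (hs : 0 < s) :
    (∫ z : ℝ, ‖(1 + |s * z + A|)⁻¹ * Real.exp (-z ^ 2 / 2)‖)
      ≤ s ^ (-(3/4) : ℝ) * (lem5C0 + lem5C1) := by
  set z₀ : ℝ := -A / s with hz₀
  have hsA : ∀ z : ℝ, s * z + A = s * (z - z₀) := by
    intro z; rw [hz₀]; field_simp; ring
  have hmono : (∫ z : ℝ, ‖(1 + |s * z + A|)⁻¹ * Real.exp (-z ^ 2 / 2)‖)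
      ≤ ∫ z : ℝ, s ^ (-(3/4) : ℝ) * lem5H z₀ z := by
    apply integral_mono_of_nonneg (ae_of_all _ fun z => norm_nonneg _)
      ((lem5H_integrable z₀).const_mul _)
    have hae : ∀ᵐ z : ℝ, z ≠ z₀ := by
      rw [ae_iff]
      have hset : {a : ℝ | ¬a ≠ z₀} = {z₀} := by ext a; simp
      rw [hset]
      exact measure_singleton z₀
    filter_upwards [hae] with z hz
    rw [Real.norm_of_nonneg (by positivity)]
    have habs : |s * z + A| = s * |z - z₀| := by
      rw [hsA z, abs_mul, abs_of_pos hs]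
    have hx : 0 < s * |z - z₀| := mul_pos hs (abs_pos.2 (sub_ne_zero.2 hz))
    have h1 : (1 + |s * z + A|)⁻¹ ≤ s ^ (-(3/4) : ℝ) * |z - z₀| ^ (-(3/4) : ℝ) := by
      rw [habs]
      calc (1 + s * |z - z₀|)⁻¹ ≤ (s * |z - z₀|) ^ (-(3/4) : ℝ) := lem5_inv_le_rpow hx
        _ = s ^ (-(3/4) : ℝ) * |z - z₀| ^ (-(3/4) : ℝ) :=
          Real.mul_rpow hs.le (abs_nonneg _)
    calc (1 + |s * z + A|)⁻¹ * Real.exp (-z ^ 2 / 2)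
        ≤ s ^ (-(3/4) : ℝ) * |z - z₀| ^ (-(3/4) : ℝ) * Real.exp (-z ^ 2 / 2) :=
          mul_le_mul_of_nonneg_right h1 (Real.exp_nonneg _)
      _ = s ^ (-(3/4) : ℝ) * (|z - z₀| ^ (-(3/4) : ℝ) * Real.exp (-z ^ 2 / 2)) := by ring
      _ ≤ s ^ (-(3/4) : ℝ) * lem5H z₀ z :=
          mul_le_mul_of_nonneg_left (lem5H_bound z₀ z) (Real.rpow_nonneg hs.le _)
  rw [integral_const_mul, lem5H_integral z₀] at hmono
  exact hmono

lemma lem5_triv (a b : ℝ) :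
    (∫ z : ℝ, ‖(1 + |a * z + b|)⁻¹ * Real.exp (-z ^ 2 / 2)‖) ≤ lem5C1 := by
  apply integral_mono_of_nonneg (ae_of_all _ fun z => norm_nonneg _) lem5_int_gauss
  refine ae_of_all _ fun z => ?_
  show ‖(1 + |a * z + b|)⁻¹ * Real.exp (-z ^ 2 / 2)‖ ≤ Real.exp (-z ^ 2 / 2)
  rw [Real.norm_of_nonneg (by positivity)]
  apply mul_le_of_le_one_left (Real.exp_nonneg _)
  apply inv_le_one_of_one_le₀
  simp [abs_nonneg]

lemma lem5C1_nonneg : 0 ≤ lem5C1 :=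
  integral_nonneg fun z => Real.exp_nonneg _

lemma lem5C0_nonneg : 0 ≤ lem5C0 :=
  integral_nonneg fun u =>
    Set.indicator_nonneg (fun x _ => Real.rpow_nonneg (abs_nonneg _) _) u

lemma lem5_general (s A : ℝ → ℝ) (hs_cont : Continuous s) (hA_cont : Continuous A)
    (hs_pos : ∀ c, 0 < s c) (c₀ K₃ : ℝ) (hc₀ : 1 ≤ c₀) (hK₃ : 0 < K₃)
    (hlow : ∀ c, c₀ < c → K₃ * c ^ 2 ≤ s c) :
    IntegrableOn
      (fun p : ℝ × ℝ => (1 + |s p.1 * p.2 + A p.1|)⁻¹ * Real.exp (-p.2 ^ 2 / 2))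
      (Set.Ioi (0:ℝ) ×ˢ Set.univ) := by
  have hF : Continuous fun p : ℝ × ℝ =>
      (1 + |s p.1 * p.2 + A p.1|)⁻¹ * Real.exp (-p.2 ^ 2 / 2) := by
    have h1 : Continuous fun p : ℝ × ℝ => s p.1 * p.2 + A p.1 :=
      ((hs_cont.comp continuous_fst).mul continuous_snd).add (hA_cont.comp continuous_fst)
    have h2 : Continuous fun p : ℝ × ℝ => (1 + |s p.1 * p.2 + A p.1|)⁻¹ :=
      Continuous.inv₀ (continuous_const.add h1.abs) (fun p => by positivity)
    exact h2.mul (by continuity)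
  rw [IntegrableOn, Measure.volume_eq_prod, ← Measure.prod_restrict, Measure.restrict_univ]
  rw [integrable_prod_iff hF.aestronglyMeasurable]
  have hg_meas : AEStronglyMeasurable
      (fun c : ℝ => ∫ z : ℝ, ‖(1 + |s c * z + A c|)⁻¹ * Real.exp (-z ^ 2 / 2)‖)
      (volume : Measure ℝ) :=
    (hF.aestronglyMeasurable (μ := (volume : Measure ℝ).prod volume)).norm.integral_prod_right'
  refine ⟨ae_of_all _ fun c => lem5_part1 (s c) (A c), ?_⟩
  rw [← IntegrableOn, ← Set.Ioc_union_Ioi_eq_Ioi (le_trans zero_le_one hc₀ : (0:ℝ) ≤ c₀)]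
  apply IntegrableOn.union
  · apply Integrable.mono' (g := fun _ => lem5C1)
      (integrableOn_const measure_Ioc_lt_top.ne) hg_meas.restrict
    refine ae_of_all _ fun c => ?_
    rw [Real.norm_of_nonneg (integral_nonneg fun z => norm_nonneg _)]
    exact lem5_triv (s c) (A c)
  · apply Integrable.mono'
      (g := fun c : ℝ => (lem5C0 + lem5C1) * K₃ ^ (-(3/4) : ℝ) * c ^ (-(3/2) : ℝ))
      (((integrableOn_Ioi_rpow_of_lt (by norm_num) (lt_of_lt_of_le zero_lt_one hc₀)).const_mul _))
      hg_meas.restrict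
    filter_upwards [ae_restrict_mem measurableSet_Ioi] with c hc
    have hc0 : (0:ℝ) < c := lt_of_lt_of_le zero_lt_one (le_trans hc₀ (le_of_lt hc))
    rw [Real.norm_of_nonneg (integral_nonneg fun z => norm_nonneg _)]
    have hC2 : (0:ℝ) ≤ lem5C0 + lem5C1 := add_nonneg lem5C0_nonneg lem5C1_nonneg
    calc (∫ z : ℝ, ‖(1 + |s c * z + A c|)⁻¹ * Real.exp (-z ^ 2 / 2)‖)
        ≤ (s c) ^ (-(3/4) : ℝ) * (lem5C0 + lem5C1) := lem5_key (A c) (hs_pos c)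
      _ ≤ (K₃ * c ^ 2) ^ (-(3/4) : ℝ) * (lem5C0 + lem5C1) := by
          apply mul_le_mul_of_nonneg_right _ hC2
          exact Real.rpow_le_rpow_of_nonpos (by positivity) (hlow c hc) (by norm_num)
      _ = (lem5C0 + lem5C1) * K₃ ^ (-(3/4) : ℝ) * c ^ (-(3/2) : ℝ) := by
          have h24 : (K₃ * c ^ 2) ^ (-(3/4) : ℝ)
              = K₃ ^ (-(3/4) : ℝ) * c ^ (-(3/2) : ℝ) := by
            rw [Real.mul_rpow hK₃.le (by positivity), ← Real.rpow_natCast c 2,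
              ← Real.rpow_mul hc0.le]
            norm_num
          rw [h24]; ring

set_option maxHeartbeats 2000000 in

theorem lemma5_finiteness (T : ℕ) (hT : 2 ≤ T) (Δ Δp : ℕ → ℝ)
    (hΔ : ∀ t ∈ Finset.Icc 1 T, 0 < Δ t) (hΔp : ∀ t ∈ Finset.Icc 1 T, 0 < Δp t)
    (ρ μ V φ : ℝ) (hρ : 0 < ρ) (hV : 0 < V) (hφ : 0 < φ) :
    (∀ B A : ℝ, 0 < B →
      Integrable (fun z : ℝ => (1 + |Real.sqrt B * z + A|)⁻¹ * Real.exp (-z ^ 2 / 2))) ∧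
    IntegrableOn
      (fun p : ℝ × ℝ =>
        (1 + |Real.sqrt
            (((∑ t ∈ Finset.Icc 1 T, Δ t * ∏ i ∈ Finset.Icc (t + 1) T, (1 - p.1 * ρ * Δp i) ^ 2)
              + φ * V * ∏ t ∈ Finset.Icc 1 T, (1 - p.1 * ρ * Δp t) ^ 2) / φ) * p.2 +
          (μ * ∏ t ∈ Finset.Icc 1 T, (1 - p.1 * ρ * Δp t)
            + ∑ t ∈ Finset.Icc 1 T, p.1 * Δp t *
                ∏ i ∈ Finset.Icc (t + 1) T, (1 - p.1 * ρ * Δp i))|)⁻¹ *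
          Real.exp (-p.2 ^ 2 / 2))
      (Set.Ioi (0:ℝ) ×ˢ Set.univ) := by
  constructor
  · exact fun B A _ => lem5_part1 (Real.sqrt B) A
  · -- notation
    set Bf : ℝ → ℝ := fun c =>
      (∑ t ∈ Finset.Icc 1 T, Δ t * ∏ i ∈ Finset.Icc (t + 1) T, (1 - c * ρ * Δp i) ^ 2)
        + φ * V * ∏ t ∈ Finset.Icc 1 T, (1 - c * ρ * Δp t) ^ 2 with hBf
    have hTmem : T ∈ Finset.Icc 1 T := Finset.mem_Icc.2 ⟨by omega, le_rfl⟩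
    have hBpos : ∀ c, 0 < Bf c := by
      intro c
      have hsum : 0 < ∑ t ∈ Finset.Icc 1 T, Δ t *
          ∏ i ∈ Finset.Icc (t + 1) T, (1 - c * ρ * Δp i) ^ 2 := by
        apply Finset.sum_pos'
        · exact fun t ht => mul_nonneg (hΔ t ht).le (Finset.prod_nonneg fun i _ => sq_nonneg _)
        · refine ⟨T, hTmem, ?_⟩
          rw [show Finset.Icc (T + 1) T = ∅ from Finset.Icc_eq_empty (by omega),
            Finset.prod_empty, mul_one]
          exact hΔ T hTmem
      have h2 : 0 ≤ φ * V * ∏ t ∈ Finset.Icc 1 T, (1 - c * ρ * Δp t) ^ 2 :=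
        mul_nonneg (mul_nonneg hφ.le hV.le) (Finset.prod_nonneg fun i _ => sq_nonneg _)
      rw [hBf]; dsimp only; linarith
    have hfac : ∀ i : ℕ, Continuous fun c : ℝ => 1 - c * ρ * Δp i := fun i =>
      continuous_const.sub ((continuous_id.mul continuous_const).mul continuous_const)
    have hBcont : Continuous Bf := by
      rw [hBf]
      apply Continuous.add
      · apply continuous_finset_sum
        intro t _
        exact continuous_const.mul (continuous_finset_prod _ fun i _ => (hfac i).pow 2)
      · exact continuous_const.mul (continuous_finset_prod _ fun i _ => (hfac i).pow 2)
    set P : ℝ := ∏ t ∈ Finset.Icc 1 T, Δp t with hP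
    have hPpos : 0 < P := Finset.prod_pos fun t ht => hΔp t ht
    set c₀ : ℝ := 1 + ∑ t ∈ Finset.Icc 1 T, 2 / (ρ * Δp t) with hc₀def
    have hc₀ : 1 ≤ c₀ := le_add_of_nonneg_right
      (Finset.sum_nonneg fun t ht => div_nonneg (by norm_num)
        (mul_nonneg hρ.le (hΔp t ht).le))
    set K₃ : ℝ := Real.sqrt V * (ρ / 2) ^ T * P with hK₃def
    have hK₃ : 0 < K₃ :=
      mul_pos (mul_pos (Real.sqrt_pos.2 hV) (pow_pos (by positivity) T)) hPpos
    have hAcont : Continuous (fun c : ℝ => μ * ∏ t ∈ Finset.Icc 1 T, (1 - c * ρ * Δp t)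
        + ∑ t ∈ Finset.Icc 1 T, c * Δp t *
            ∏ i ∈ Finset.Icc (t + 1) T, (1 - c * ρ * Δp i)) := by
      apply Continuous.add
      · exact continuous_const.mul (continuous_finset_prod _ fun i _ => hfac i)
      · apply continuous_finset_sum
        intro t _
        exact (continuous_id.mul continuous_const).mul
          (continuous_finset_prod _ fun i _ => hfac i)
    have hlow : ∀ c, c₀ < c → K₃ * c ^ 2 ≤ Real.sqrt (Bf c / φ) := ?_
    case _ =>
      exact lem5_general (fun c => Real.sqrt (Bf c / φ))
        (fun c => μ * ∏ t ∈ Finset.Icc 1 T, (1 - c * ρ * Δp t)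
          + ∑ t ∈ Finset.Icc 1 T, c * Δp t *
              ∏ i ∈ Finset.Icc (t + 1) T, (1 - c * ρ * Δp i))
        (Real.continuous_sqrt.comp (hBcont.div_const φ)) hAcont
        (fun c => Real.sqrt_pos.2 (div_pos (hBpos c) hφ)) c₀ K₃ hc₀ hK₃ hlow
    · intro c hc
      have hc1 : 1 ≤ c := le_trans hc₀ hc.le
      have hc0 : 0 < c := lt_of_lt_of_le zero_lt_one hc1
      apply Real.le_sqrt_of_sq_le
      have step1 : ∀ t ∈ Finset.Icc 1 T,
          (c * ρ * Δp t / 2) ^ 2 ≤ (1 - c * ρ * Δp t) ^ 2 := by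
        intro t ht
        have hpos : 0 < ρ * Δp t := mul_pos hρ (hΔp t ht)
        have hterm : 2 / (ρ * Δp t) ≤ ∑ t ∈ Finset.Icc 1 T, 2 / (ρ * Δp t) :=
          Finset.single_le_sum
            (f := fun t => 2 / (ρ * Δp t))
            (fun i hi => div_nonneg (by norm_num) (mul_nonneg hρ.le (hΔp i hi).le)) ht
        have hcgt : 2 / (ρ * Δp t) < c := by rw [hc₀def] at hc; linarith
        have hct : 2 ≤ c * ρ * Δp t := by
          have := (div_lt_iff₀ hpos).mp hcgt
          nlinarith
        nlinarith [hct]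
      have step2 : ∏ t ∈ Finset.Icc 1 T, (c * ρ * Δp t / 2) ^ 2
          ≤ ∏ t ∈ Finset.Icc 1 T, (1 - c * ρ * Δp t) ^ 2 :=
        Finset.prod_le_prod (fun t _ => sq_nonneg _) step1
      have step3 : ∏ t ∈ Finset.Icc 1 T, (c * ρ * Δp t / 2) ^ 2
          = (c ^ 2) ^ T * ((ρ / 2) ^ 2) ^ T * P ^ 2 := by
        calc ∏ t ∈ Finset.Icc 1 T, (c * ρ * Δp t / 2) ^ 2
            = ∏ t ∈ Finset.Icc 1 T, ((c ^ 2 * (ρ / 2) ^ 2) * (Δp t) ^ 2) :=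
              Finset.prod_congr rfl fun t _ => by ring
          _ = (c ^ 2 * (ρ / 2) ^ 2) ^ (Finset.Icc 1 T).card
                * ∏ t ∈ Finset.Icc 1 T, (Δp t) ^ 2 := by
              rw [Finset.prod_mul_distrib, Finset.prod_const]
          _ = (c ^ 2) ^ T * ((ρ / 2) ^ 2) ^ T * P ^ 2 := by
              rw [Nat.card_Icc, hP, Finset.prod_pow, mul_pow]
              norm_num
      have hsq : Real.sqrt V ^ 2 = V := Real.sq_sqrt hV.le
      have expand : (K₃ * c ^ 2) ^ 2 = V * ((ρ / 2) ^ 2) ^ T * P ^ 2 * (c ^ 2) ^ 2 := by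
        rw [hK₃def]
        calc (Real.sqrt V * (ρ / 2) ^ T * P * c ^ 2) ^ 2
            = Real.sqrt V ^ 2 * ((ρ / 2) ^ T) ^ 2 * P ^ 2 * (c ^ 2) ^ 2 := by ring
          _ = V * ((ρ / 2) ^ 2) ^ T * P ^ 2 * (c ^ 2) ^ 2 := by rw [hsq, pow_right_comm]
      have hc2 : (c ^ 2) ^ 2 ≤ (c ^ 2) ^ T := by
        apply pow_le_pow_right₀ _ hT
        nlinarith
      have hBdiv : V * ∏ t ∈ Finset.Icc 1 T, (1 - c * ρ * Δp t) ^ 2 ≤ Bf c / φ := by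
        rw [le_div_iff₀ hφ, hBf]
        dsimp only
        have hsum : 0 ≤ ∑ t ∈ Finset.Icc 1 T, Δ t *
            ∏ i ∈ Finset.Icc (t + 1) T, (1 - c * ρ * Δp i) ^ 2 :=
          Finset.sum_nonneg fun t ht =>
            mul_nonneg (hΔ t ht).le (Finset.prod_nonneg fun i _ => sq_nonneg _)
        nlinarith
      calc (K₃ * c ^ 2) ^ 2 = V * ((ρ / 2) ^ 2) ^ T * P ^ 2 * (c ^ 2) ^ 2 := expand
        _ ≤ V * ((ρ / 2) ^ 2) ^ T * P ^ 2 * (c ^ 2) ^ T := by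
            gcongr
        _ = V * ((c ^ 2) ^ T * ((ρ / 2) ^ 2) ^ T * P ^ 2) := by ring
        _ = V * ∏ t ∈ Finset.Icc 1 T, (c * ρ * Δp t / 2) ^ 2 := by rw [step3]
        _ ≤ V * ∏ t ∈ Finset.Icc 1 T, (1 - c * ρ * Δp t) ^ 2 :=
            mul_le_mul_of_nonneg_left step2 hV.le
        _ ≤ Bf c / φ := hBdiv
end
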